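/- The normalizer of SL₂(L) in SL₂(K) is exactly T(K)·SL₂(L): an element n ∈ SL₂(K) satisfies n·SL₂(L)·n⁻¹ = SL₂(L) if and only if n = d·g for some d ∈ T(K) and g ∈ SL₂(L). -/

import Mathlib

open Matrix Pointwise

noncomputable section

variable {K : Type*} [Field K]

abbrev SL2 (K : Type*) [Field K] := Matrix.SpecialLinearGroup (Fin 2) K

/-- `a(t) = [[1,t],[0,1]]`. -/
def aMat (t : K) : SL2 K :=
  ⟨!![1, t; 0, 1], by simp [Matrix.det_fin_two_of]⟩

/-- `b(t) = [[1,0],[t,1]]`. -/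
def bMat (t : K) : SL2 K :=
  ⟨!![1, 0; t, 1], by simp [Matrix.det_fin_two_of]⟩

/-- `diag(s) = [[s,0],[0,s⁻¹]]`. -/
def diagMat (s : Kˣ) : SL2 K :=
  ⟨!![(s : K), 0; 0, ((s⁻¹ : Kˣ) : K)], by simp [Matrix.det_fin_two_of]⟩

/-- `w = [[0,1],[1,0]]`, in `SL₂` since `char K = 2`. -/
def wMat (K : Type*) [Field K] [CharP K 2] : SL2 K :=
  ⟨!![0, 1; 1, 0], by simp [Matrix.det_fin_two_of, CharTwo.neg_eq]⟩

def setA (L : AddSubgroup K) : Set (SL2 K) := {g | ∃ t ∈ L, g = aMat t}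

def setAop (L : AddSubgroup K) : Set (SL2 K) := {g | ∃ t ∈ L, g = bMat t}

/-- Timmesfeld's `SL₂(L)`. -/
def SL2L (L : AddSubgroup K) : Subgroup (SL2 K) := Subgroup.closure (setA L ∪ setAop L)

/-- The subgroup of `Kˣ` generated by the nonzero elements of `L`. -/
def Tgen (L : AddSubgroup K) : Subgroup Kˣ := Subgroup.closure {u : Kˣ | (u : K) ∈ L}

def setTL (L : AddSubgroup K) : Set (SL2 K) := {g | ∃ s ∈ Tgen L, g = diagMat s}

def setTK (K : Type*) [Field K] : Set (SL2 K) := {g | ∃ s : Kˣ, g = diagMat s}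

def setB (L : AddSubgroup K) : Set (SL2 K) := setTL L * setA L

/-! ### Auxiliary lemmas -/

lemma det_entries (g : SL2 K) : g.1 0 0 * g.1 1 1 - g.1 0 1 * g.1 1 0 = 1 := by
  have := g.2; rwa [Matrix.det_fin_two] at this

lemma mul_entry (g h : SL2 K) (i j : Fin 2) :
    (g * h).1 i j = g.1 i 0 * h.1 0 j + g.1 i 1 * h.1 1 j := by
  simp [Matrix.mul_apply, Fin.sum_univ_two]

lemma inv_entries (g : SL2 K) :
    (g⁻¹).1 = !![g.1 1 1, -g.1 0 1; -g.1 1 0, g.1 0 0] := by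
  rw [Matrix.SpecialLinearGroup.coe_inv, Matrix.adjugate_fin_two]

lemma coe_fin_two (g : SL2 K) : g.1 = !![g.1 0 0, g.1 0 1; g.1 1 0, g.1 1 1] := by
  ext i j; fin_cases i <;> fin_cases j <;> rfl

lemma conj_aMat_entries (n : SL2 K) (t : K) :
    (n * aMat t * n⁻¹).1 =
      !![n.1 0 0 * n.1 1 1 - n.1 0 1 * n.1 1 0 - n.1 0 0 * n.1 1 0 * t, n.1 0 0 ^ 2 * t;
         -(n.1 1 0 ^ 2 * t), n.1 0 0 * n.1 1 1 - n.1 0 1 * n.1 1 0 + n.1 0 0 * n.1 1 0 * t] := by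
  have h1 : (n * aMat t * n⁻¹).1 = n.1 * (aMat t).1 * (n⁻¹).1 := by simp
  rw [h1, inv_entries, coe_fin_two n, aMat, Matrix.mul_fin_two, Matrix.mul_fin_two]
  ext i j
  fin_cases i <;> fin_cases j <;> simp <;> ring

lemma conj_bMat_entries (n : SL2 K) (t : K) :
    (n * bMat t * n⁻¹).1 =
      !![n.1 0 0 * n.1 1 1 - n.1 0 1 * n.1 1 0 + n.1 0 1 * n.1 1 1 * t, -(n.1 0 1 ^ 2 * t);
         n.1 1 1 ^ 2 * t, n.1 0 0 * n.1 1 1 - n.1 0 1 * n.1 1 0 - n.1 0 1 * n.1 1 1 * t] := by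
  have h1 : (n * bMat t * n⁻¹).1 = n.1 * (bMat t).1 * (n⁻¹).1 := by simp
  rw [h1, inv_entries, coe_fin_two n, bMat, Matrix.mul_fin_two, Matrix.mul_fin_two]
  ext i j
  fin_cases i <;> fin_cases j <;> simp <;> ring

variable {L : AddSubgroup K}

lemma inv_mem_L (hvs : ∀ s t : K, t ∈ L → s ^ 2 * t ∈ L) {t : K} (ht : t ∈ L) : t⁻¹ ∈ L := by
  rcases eq_or_ne t 0 with h | h
  · simp [h, zero_mem]
  · have := hvs t⁻¹ t ht
    rwa [sq, mul_assoc, inv_mul_cancel₀ h, mul_one] at this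

lemma one_mem_L (hsq : ∀ x : K, x ^ 2 ∈ L) : (1 : K) ∈ L := by simpa using hsq 1

lemma aMat_mem {t : K} (ht : t ∈ L) : aMat t ∈ SL2L L :=
  Subgroup.subset_closure (Or.inl ⟨t, ht, rfl⟩)

lemma bMat_mem {t : K} (ht : t ∈ L) : bMat t ∈ SL2L L :=
  Subgroup.subset_closure (Or.inr ⟨t, ht, rfl⟩)

lemma wMat_eq [CharP K 2] : (wMat K : SL2 K) = bMat 1 * aMat 1 * bMat 1 := by
  have h2 : (2 : K) = 0 := by simpa using CharP.cast_eq_zero K 2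
  apply Subtype.ext
  show (wMat K).1 = (bMat 1).1 * (aMat 1).1 * (bMat 1).1
  rw [wMat, aMat, bMat, Matrix.mul_fin_two, Matrix.mul_fin_two]
  ext i j
  fin_cases i <;> fin_cases j <;> simp <;> first | linear_combination -h2 | linear_combination h2

lemma wMat_mem [CharP K 2] (hsq : ∀ x : K, x ^ 2 ∈ L) : wMat K ∈ SL2L L := by
  rw [wMat_eq]
  exact mul_mem (mul_mem (bMat_mem (one_mem_L hsq)) (aMat_mem (one_mem_L hsq)))
    (bMat_mem (one_mem_L hsq))

/-! ### The entry invariant -/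

def Good (L : AddSubgroup K) (g : SL2 K) : Prop :=
  (g.1 1 0 = 0 → g.1 0 0 * g.1 0 1 ∈ L) ∧
  (g.1 1 0 ≠ 0 → g.1 0 0 / g.1 1 0 ∈ L ∧ g.1 1 1 / g.1 1 0 ∈ L)

lemma good_one : Good L (1 : SL2 K) := by
  constructor
  · intro _
    have : (1 : SL2 K).1 0 0 * (1 : SL2 K).1 0 1 = 0 := by simp
    rw [this]; exact zero_mem L
  · intro h; exact absurd (by simp) h

lemma good_aMat {t : K} (ht : t ∈ L) : Good L (aMat t) := by
  constructor
  · intro _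
    have : (aMat t).1 0 0 * (aMat t).1 0 1 = t := by simp [aMat]
    rw [this]; exact ht
  · intro h; exact absurd (by simp [aMat]) h

lemma good_bMat (hvs : ∀ s t : K, t ∈ L → s ^ 2 * t ∈ L) {t : K} (ht : t ∈ L) :
    Good L (bMat t) := by
  constructor
  · intro _
    have : (bMat t).1 0 0 * (bMat t).1 0 1 = 0 := by simp [bMat]
    rw [this]; exact zero_mem L
  · intro _
    have h1 : (bMat t).1 0 0 / (bMat t).1 1 0 = t⁻¹ := by simp [bMat]
    have h2 : (bMat t).1 1 1 / (bMat t).1 1 0 = t⁻¹ := by simp [bMat]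
    rw [h1, h2]
    exact ⟨inv_mem_L hvs ht, inv_mem_L hvs ht⟩

lemma good_inv (hvs : ∀ s t : K, t ∈ L → s ^ 2 * t ∈ L) {x : SL2 K} (hx : Good L x) :
    Good L x⁻¹ := by
  obtain ⟨hxu, hxl⟩ := hx
  have hdx := det_entries x
  have e0 : (x⁻¹).1 0 0 = x.1 1 1 := by rw [inv_entries]; simp
  have e1 : (x⁻¹).1 0 1 = -x.1 0 1 := by rw [inv_entries]; simp
  have e2 : (x⁻¹).1 1 0 = -x.1 1 0 := by rw [inv_entries]; simp
  have e3 : (x⁻¹).1 1 1 = x.1 0 0 := by rw [inv_entries]; simp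
  constructor
  · intro h
    rw [e2, neg_eq_zero] at h
    rw [e0, e1]
    have key : x.1 1 1 * -(x.1 0 1) = (x.1 1 1)^2 * (-(x.1 0 0 * x.1 0 1)) := by
      linear_combination (x.1 1 1 * x.1 0 1) * hdx + (x.1 1 1 * x.1 0 1 ^ 2) * h
    rw [key]; exact hvs _ _ (neg_mem (hxu h))
  · intro h
    rw [e2, ne_eq, neg_eq_zero] at h
    obtain ⟨ha, hb⟩ := hxl h
    rw [e0, e2, e3]
    exact ⟨by rw [div_neg]; exact neg_mem hb, by rw [div_neg]; exact neg_mem ha⟩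

lemma good_mul (hvs : ∀ s t : K, t ∈ L → s ^ 2 * t ∈ L)
    {x y : SL2 K} (hx : Good L x) (hy : Good L y) : Good L (x * y) := by
  obtain ⟨hxu, hxl⟩ := hx
  obtain ⟨hyu, hyl⟩ := hy
  unfold Good
  rw [mul_entry x y 1 0, mul_entry x y 0 0, mul_entry x y 0 1, mul_entry x y 1 1]
  have hdx := det_entries x
  have hdy := det_entries y
  set x0 := x.1 0 0 with hx0
  set x1 := x.1 0 1 with hx1
  set x2 := x.1 1 0 with hx2d
  set x3 := x.1 1 1 with hx3d
  set y0 := y.1 0 0 with hy0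
  set y1 := y.1 0 1 with hy1
  set y2 := y.1 1 0 with hy2d
  set y3 := y.1 1 1 with hy3d
  refine ⟨fun h10 => ?_, fun h10 => ?_⟩
  · by_cases hx2 : x2 = 0
    · by_cases hy2 : y2 = 0
      · have key : (x0 * y0 + x1 * y2) * (x0 * y1 + x1 * y3) = x0 ^ 2 * (y0 * y1) + x0 * x1 := by
          linear_combination x0 * x1 * hdy + (2 * x0 * x1 * y1 + x1 ^ 2 * y3) * hy2
        rw [key]; exact add_mem (hvs _ _ (hyu hy2)) (hxu hx2)
      · exfalso
        have hx3 : x3 ≠ 0 := by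
          intro h
          exact one_ne_zero (α := K) (by linear_combination -hdx - x1 * hx2 + x0 * h)
        have : x3 * y2 = 0 := by linear_combination h10 - y0 * hx2
        exact hy2 ((mul_eq_zero.1 this).resolve_left hx3)
    · by_cases hy2 : y2 = 0
      · exfalso
        have hy0' : y0 ≠ 0 := by
          intro h
          exact one_ne_zero (α := K) (by linear_combination -hdy - y1 * hy2 + y3 * h)
        have : x2 * y0 = 0 := by linear_combination h10 - x3 * hy2
        exact hx2 ((mul_eq_zero.1 this).resolve_right hy0')
      · obtain ⟨hxa, hxb⟩ := hxl hx2
        obtain ⟨hya, hyb⟩ := hyl hy2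
        have key : (x0 * y0 + x1 * y2) * (x0 * y1 + x1 * y3)
            = x0 / x2 + (x2⁻¹) ^ 2 * (y2 ^ 2 * (y3 / y2)) := by
          field_simp
          linear_combination (x0 ^ 2 * (x2 * y1 + x3 * y3) - 2 * x0 * y3 * (x0 * x3 - x1 * x2)) * h10 +
            (x0 * x2 * (y0 * y3 - y1 * y2) + y2 * y3 * (x0 * x3 - x1 * x2 + 1)) * hdx + x0 * x2 * hdy
        rw [key]; exact add_mem hxa (hvs _ _ (hvs _ _ hyb))
  · by_cases hx2 : x2 = 0
    · have hx3 : x3 ≠ 0 := by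
        intro h
        exact one_ne_zero (α := K) (by linear_combination -hdx - x1 * hx2 + x0 * h)
      by_cases hy2 : y2 = 0
      · exact absurd (by rw [hx2, hy2]; ring) h10
      constructor
      · have key : (x0 * y0 + x1 * y2) / (x2 * y0 + x3 * y2) = x0 ^ 2 * (y0 / y2) + x0 * x1 := by
          field_simp
          rw [div_eq_iff (by rwa [mul_comm y0, mul_comm y2])]
          linear_combination (-y2 * (x0 * y0 + x1 * y2)) * hdx +
            (-(y2 * (x0 * y0 + x1 * y2) * x1) - x0 * (x0 * y0 + x1 * y2) * y0) * hx2
        rw [key]; exact add_mem (hvs _ _ (hyl hy2).1) (hxu hx2)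
      · have key : (x2 * y1 + x3 * y3) / (x2 * y0 + x3 * y2) = y3 / y2 := by
          rw [hx2, zero_mul, zero_mul, zero_add, zero_add, mul_div_mul_left _ _ hx3]
        rw [key]; exact (hyl hy2).2
    · by_cases hy2 : y2 = 0
      · have hy0' : y0 ≠ 0 := by
          intro h
          exact one_ne_zero (α := K) (by linear_combination -hdy - y1 * hy2 + y3 * h)
        obtain ⟨hxa, hxb⟩ := hxl hx2
        constructor
        · have key : (x0 * y0 + x1 * y2) / (x2 * y0 + x3 * y2) = x0 / x2 := by
            rw [hy2, mul_zero, mul_zero, add_zero, add_zero, mul_div_mul_right _ _ hy0']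
          rw [key]; exact hxa
        · have key : (x2 * y1 + x3 * y3) / (x2 * y0 + x3 * y2)
              = (y0⁻¹) ^ 2 * (y0 * y1) + (y0⁻¹) ^ 2 * (x3 / x2) := by
            field_simp
            linear_combination (x2 * x3 * y0) * hdy + (-x3 ^ 2) * hy2
          rw [key]; exact add_mem (hvs _ _ (hyu hy2)) (hvs _ _ hxb)
      · obtain ⟨hxa, hxb⟩ := hxl hx2
        obtain ⟨hya, hyb⟩ := hyl hy2
        have hfac : x2 * y0 + x3 * y2 = x2 * y2 * (y0 / y2 + x3 / x2) := by
          field_simp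
        have hqne : y0 / y2 + x3 / x2 ≠ 0 := by
          intro h
          apply h10
          rw [hfac, h, mul_zero]
        have hqinv : (y0 / y2 + x3 / x2)⁻¹ ∈ L := inv_mem_L hvs (add_mem hya hxb)
        have hcq : (x2 * y0 + x3 * y2) * (y0 / y2 + x3 / x2)⁻¹ = x2 * y2 := by
          rw [hfac, mul_assoc, mul_inv_cancel₀ hqne, mul_one]
        constructor
        · have key : (x0 * y0 + x1 * y2) / (x2 * y0 + x3 * y2)
              = x0 / x2 - (x2⁻¹) ^ 2 * (y0 / y2 + x3 / x2)⁻¹ := by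
            rw [div_eq_iff h10, sub_mul]
            have h2 : (x2⁻¹) ^ 2 * (y0 / y2 + x3 / x2)⁻¹ * (x2 * y0 + x3 * y2)
                = (x2⁻¹) ^ 2 * (x2 * y2) := by
              rw [show (x2⁻¹) ^ 2 * (y0 / y2 + x3 / x2)⁻¹ * (x2 * y0 + x3 * y2)
                  = (x2⁻¹) ^ 2 * ((x2 * y0 + x3 * y2) * (y0 / y2 + x3 / x2)⁻¹) from by ring, hcq]
            rw [h2]
            field_simp
            linear_combination (-y2) * hdx
          rw [key]; exact sub_mem hxa (hvs _ _ hqinv)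
        · have key : (x2 * y1 + x3 * y3) / (x2 * y0 + x3 * y2)
              = y3 / y2 - (y2⁻¹) ^ 2 * (y0 / y2 + x3 / x2)⁻¹ := by
            rw [div_eq_iff h10, sub_mul]
            have h2 : (y2⁻¹) ^ 2 * (y0 / y2 + x3 / x2)⁻¹ * (x2 * y0 + x3 * y2)
                = (y2⁻¹) ^ 2 * (x2 * y2) := by
              rw [show (y2⁻¹) ^ 2 * (y0 / y2 + x3 / x2)⁻¹ * (x2 * y0 + x3 * y2)
                  = (y2⁻¹) ^ 2 * ((x2 * y0 + x3 * y2) * (y0 / y2 + x3 / x2)⁻¹) from by ring, hcq]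
            rw [h2]
            field_simp
            linear_combination (-x2) * hdy
          rw [key]; exact sub_mem hyb (hvs _ _ hqinv)

lemma good_of_mem (hvs : ∀ s t : K, t ∈ L → s ^ 2 * t ∈ L) {g : SL2 K} (hg : g ∈ SL2L L) :
    Good L g := by
  refine Subgroup.closure_induction (p := fun g _ => Good L g) ?_ good_one
    (fun a b _ _ ha hb => good_mul hvs ha hb) (fun a _ ha => good_inv hvs ha) hg
  rintro g (⟨t, ht, rfl⟩ | ⟨t, ht, rfl⟩)
  · exact good_aMat ht
  · exact good_bMat hvs ht

/-! ### Conjugation by diagonal matrices -/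

lemma diagMat_inv (s : Kˣ) : (diagMat s)⁻¹ = diagMat s⁻¹ := by
  apply inv_eq_of_mul_eq_one_right
  apply Subtype.ext
  show (diagMat s).1 * (diagMat s⁻¹).1 = 1
  rw [diagMat, diagMat, Matrix.mul_fin_two]
  ext i j
  fin_cases i <;> fin_cases j <;> simp [Matrix.one_apply]

lemma diag_conj_aMat (s : Kˣ) (t : K) :
    diagMat s * aMat t * (diagMat s)⁻¹ = aMat ((s : K) ^ 2 * t) := by
  rw [diagMat_inv]
  apply Subtype.ext
  show (diagMat s).1 * (aMat t).1 * (diagMat s⁻¹).1 = (aMat ((s : K) ^ 2 * t)).1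
  rw [diagMat, diagMat, aMat, aMat, Matrix.mul_fin_two, Matrix.mul_fin_two]
  ext i j
  fin_cases i <;> fin_cases j <;> simp <;> ring

lemma diag_conj_bMat (s : Kˣ) (t : K) :
    diagMat s * bMat t * (diagMat s)⁻¹ = bMat (((s⁻¹ : Kˣ) : K) ^ 2 * t) := by
  rw [diagMat_inv]
  apply Subtype.ext
  show (diagMat s).1 * (bMat t).1 * (diagMat s⁻¹).1 = (bMat (((s⁻¹ : Kˣ) : K) ^ 2 * t)).1
  rw [diagMat, diagMat, bMat, bMat, Matrix.mul_fin_two, Matrix.mul_fin_two]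
  ext i j
  fin_cases i <;> fin_cases j <;> simp <;> ring

lemma diag_conj_mem (hvs : ∀ s t : K, t ∈ L → s ^ 2 * t ∈ L) (s : Kˣ) {x : SL2 K}
    (hx : x ∈ SL2L L) : diagMat s * x * (diagMat s)⁻¹ ∈ SL2L L := by
  refine Subgroup.closure_induction
    (p := fun g _ => diagMat s * g * (diagMat s)⁻¹ ∈ SL2L L) ?_ ?_ ?_ ?_ hx
  · rintro g (⟨t, ht, rfl⟩ | ⟨t, ht, rfl⟩)
    · rw [diag_conj_aMat]; exact aMat_mem (hvs _ _ ht)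
    · rw [diag_conj_bMat]; exact bMat_mem (hvs _ _ ht)
  · simpa using one_mem (SL2L L)
  · intro a b _ _ ha hb
    have h : diagMat s * (a * b) * (diagMat s)⁻¹
        = (diagMat s * a * (diagMat s)⁻¹) * (diagMat s * b * (diagMat s)⁻¹) := by group
    rw [h]; exact mul_mem ha hb
  · intro a _ ha
    have h : diagMat s * a⁻¹ * (diagMat s)⁻¹ = (diagMat s * a * (diagMat s)⁻¹)⁻¹ := by group
    rw [h]; exact inv_mem ha

/-- The normalizer of `SL₂(L)` in `SL₂(K)` is exactly `T(K)·SL₂(L)`. -/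
theorem normalizer_SL2L
    [CharP K 2] (himperf : ¬ Function.Surjective fun x : K => x ^ 2)
    (L : AddSubgroup K) (hsq : ∀ x : K, x ^ 2 ∈ L)
    (hvs : ∀ s t : K, t ∈ L → s ^ 2 * t ∈ L) :
    ∀ n : SL2 K,
      (fun g => n * g * n⁻¹) '' (SL2L L : Set (SL2 K)) = (SL2L L : Set (SL2 K)) ↔
        ∃ d ∈ setTK K, ∃ g ∈ SL2L L, n = d * g := by
  intro n
  have h2 : (2 : K) = 0 := by simpa using CharP.cast_eq_zero K 2
  constructor
  · -- hard direction
    intro hset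
    have hc : ∀ x, x ∈ SL2L L → n * x * n⁻¹ ∈ SL2L L := by
      intro x hx
      have hmem : n * x * n⁻¹ ∈ (fun g => n * g * n⁻¹) '' (SL2L L : Set (SL2 K)) :=
        ⟨x, hx, rfl⟩
      rw [hset] at hmem
      exact hmem
    have hdet := det_entries n
    have h1L : (1 : K) ∈ L := one_mem_L hsq
    -- a*c ∈ L when c ≠ 0
    have hacL : n.1 1 0 ≠ 0 → n.1 0 0 * n.1 1 0 ∈ L := by
      intro hcne
      have hg := good_of_mem hvs (hc (aMat 1) (aMat_mem h1L))
      have e := conj_aMat_entries n 1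
      have e10 : (n * aMat 1 * n⁻¹).1 1 0 = -(n.1 1 0 ^ 2 * 1) := by rw [e]; simp
      have e00 : (n * aMat 1 * n⁻¹).1 0 0
          = n.1 0 0 * n.1 1 1 - n.1 0 1 * n.1 1 0 - n.1 0 0 * n.1 1 0 * 1 := by rw [e]; simp
      have hne : (n * aMat 1 * n⁻¹).1 1 0 ≠ 0 := by
        rw [e10]
        simpa using pow_ne_zero 2 hcne
      obtain ⟨hr, -⟩ := hg.2 hne
      rw [e00, e10] at hr
      have key : n.1 0 0 * n.1 1 0 = 1 + n.1 1 0 ^ 2 *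
          ((n.1 0 0 * n.1 1 1 - n.1 0 1 * n.1 1 0 - n.1 0 0 * n.1 1 0 * 1) / (-(n.1 1 0 ^ 2 * 1))) := by
        field_simp
        linear_combination hdet
      rw [key]
      exact add_mem h1L (hvs _ _ hr)
    by_cases hd : n.1 1 1 = 0
    · -- d = 0
      have hcne : n.1 1 0 ≠ 0 := by
        intro h
        refine one_ne_zero (α := K) ?_
        rw [← hdet, hd, h]; ring
      have hac := hacL hcne
      refine ⟨diagMat (Units.mk0 (n.1 1 0) hcne)⁻¹, ⟨_, rfl⟩,
        aMat (n.1 0 0 * n.1 1 0) * wMat K,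
        mul_mem (aMat_mem hac) (wMat_mem hsq), ?_⟩
      apply Subtype.ext
      show n.1 = (diagMat (Units.mk0 (n.1 1 0) hcne)⁻¹).1 * ((aMat (n.1 0 0 * n.1 1 0)).1 * (wMat K).1)
      rw [diagMat, aMat, wMat]
      ext i j
      fin_cases i <;> fin_cases j <;>
        simp [Matrix.mul_apply, Fin.sum_univ_two, Units.val_inv_eq_inv_val]
      · field_simp
      · -- b = c⁻¹
        field_simp
        linear_combination -hdet + n.1 0 0 * hd - h2
      · exact hd
    · -- d ≠ 0
      have hg := good_of_mem hvs (hc (bMat 1) (bMat_mem h1L))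
      have e := conj_bMat_entries n 1
      have e10 : (n * bMat 1 * n⁻¹).1 1 0 = n.1 1 1 ^ 2 * 1 := by rw [e]; simp
      have e00 : (n * bMat 1 * n⁻¹).1 0 0
          = n.1 0 0 * n.1 1 1 - n.1 0 1 * n.1 1 0 + n.1 0 1 * n.1 1 1 * 1 := by rw [e]; simp
      have hne : (n * bMat 1 * n⁻¹).1 1 0 ≠ 0 := by
        rw [e10]
        simpa using pow_ne_zero 2 hd
      obtain ⟨hr, -⟩ := hg.2 hne
      rw [e00, e10] at hr
      have hbd : n.1 0 1 * n.1 1 1 ∈ L := by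
        have key : n.1 0 1 * n.1 1 1 = n.1 1 1 ^ 2 *
            ((n.1 0 0 * n.1 1 1 - n.1 0 1 * n.1 1 0 + n.1 0 1 * n.1 1 1 * 1) / (n.1 1 1 ^ 2 * 1))
            - 1 := by
          field_simp
          linear_combination -hdet
        rw [key]
        exact sub_mem (hvs _ _ hr) h1L
      have hcd : n.1 1 0 / n.1 1 1 ∈ L := by
        by_cases hcz : n.1 1 0 = 0
        · rw [hcz, zero_div]; exact zero_mem L
        · have hac := hacL hcz
          have hinv : (n.1 1 0 * n.1 1 1)⁻¹ ∈ L := by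
            have key : (n.1 1 0 * n.1 1 1)⁻¹
                = ((n.1 1 0)⁻¹) ^ 2 * (n.1 0 0 * n.1 1 0) - ((n.1 1 1)⁻¹) ^ 2 * (n.1 0 1 * n.1 1 1) := by
              field_simp
              linear_combination -hdet
            rw [key]
            exact sub_mem (hvs _ _ hac) (hvs _ _ hbd)
          have hmul : n.1 1 0 * n.1 1 1 ∈ L := by
            have := inv_mem_L hvs hinv
            rwa [inv_inv] at this
          have key : n.1 1 0 / n.1 1 1 = ((n.1 1 1)⁻¹) ^ 2 * (n.1 1 0 * n.1 1 1) := by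
            field_simp
          rw [key]
          exact hvs _ _ hmul
      have hkey : n * bMat (n.1 1 0 / n.1 1 1)
          = diagMat (Units.mk0 (n.1 1 1) hd)⁻¹ * aMat (n.1 0 1 * n.1 1 1) := by
        apply Subtype.ext
        show n.1 * (bMat (n.1 1 0 / n.1 1 1)).1
          = (diagMat (Units.mk0 (n.1 1 1) hd)⁻¹).1 * (aMat (n.1 0 1 * n.1 1 1)).1
        rw [diagMat, aMat, bMat]
        ext i j
        fin_cases i <;> fin_cases j <;>
          simp [Matrix.mul_apply, Fin.sum_univ_two, Units.val_inv_eq_inv_val]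
        · field_simp
          linear_combination hdet + (n.1 0 1 * n.1 1 0) * h2
        · field_simp
        · field_simp
          linear_combination n.1 1 0 * h2
      refine ⟨diagMat (Units.mk0 (n.1 1 1) hd)⁻¹, ⟨_, rfl⟩,
        aMat (n.1 0 1 * n.1 1 1) * (bMat (n.1 1 0 / n.1 1 1))⁻¹,
        mul_mem (aMat_mem hbd) (inv_mem (bMat_mem hcd)), ?_⟩
      rw [← mul_assoc, ← hkey, mul_inv_cancel_right]
  · -- easy direction
    rintro ⟨dd, ⟨s, rfl⟩, g, hg, rfl⟩
    apply Set.eq_of_subset_of_subset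
    · rintro z ⟨x, hx, rfl⟩
      have h : (diagMat s * g) * x * (diagMat s * g)⁻¹
          = diagMat s * (g * x * g⁻¹) * (diagMat s)⁻¹ := by group
      show (diagMat s * g) * x * (diagMat s * g)⁻¹ ∈ SL2L L
      rw [h]
      exact diag_conj_mem hvs s (mul_mem (mul_mem hg hx) (inv_mem hg))
    · intro z hz
      have hz' : z ∈ SL2L L := hz
      have hinv2 : (diagMat s⁻¹ : SL2 K)⁻¹ = diagMat s := by
        rw [diagMat_inv, inv_inv]
      refine ⟨(diagMat s * g)⁻¹ * z * (diagMat s * g), ?_, by group⟩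
      have h : (diagMat s * g)⁻¹ * z * (diagMat s * g)
          = g⁻¹ * (diagMat s⁻¹ * z * (diagMat s⁻¹)⁻¹) * g := by
        rw [hinv2, ← diagMat_inv]
        group
      show (diagMat s * g)⁻¹ * z * (diagMat s * g) ∈ SL2L L
      rw [h]
      exact mul_mem (mul_mem (inv_mem hg) (diag_conj_mem hvs s⁻¹ hz')) hg

end
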